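/- Let E be a finite-dimensional real normed vector space, U ⊆ E an open set, and for each p ∈ U let N(p) : E → E be a linear map. Let M, M⁺, M⁻ : U → Mₙ(ℂ) be differentiable maps, and k, r ∈ ℂ, such that for all p ∈ U: dM⁺_p + dM⁻_p = k·dM_p, and for all tangent vectors v ∈ E: dM_p(N(p)v) = (dM⁻_p v)·M(p) + M(p)·(dM⁺_p v) + r·(dM_p v). Let m : U → ℂ be a differentiable function, α ≥ 1 an integer, and suppose there are differentiable functions c₀,…,c_{n−α} : U → ℂ such that for every p ∈ U the characteristic polynomial of M(p) factors as det(x·1 − M(p)) = (x − m(p))^α · (Σ_j c_j(p) x^j) with Σ_j c_j(p) m(p)^j ≠ 0 (i.e., m(p) is an eigenvalue of M(p) of constant algebraic multiplicity α). Then for all p ∈ U and all v ∈ E: dm_p(N(p)v) = (k·m(p) + r)·dm_p(v). -/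

import Mathlib

open Matrix Polynomial

attribute [local instance] Matrix.normedAddCommGroup Matrix.normedSpace

namespace Stmt4Aux

variable {n : ℕ}

/-- Evaluation of a matrix entry, as a continuous linear map. -/
noncomputable def entryCLM (i j : Fin n) : Matrix (Fin n) (Fin n) ℂ →L[ℝ] ℂ :=
  LinearMap.toContinuousLinearMap
    { toFun := fun B => B i j
      map_add' := fun _ _ => rfl
      map_smul' := fun _ _ => rfl }

@[simp] lemma entryCLM_apply (i j : Fin n) (B : Matrix (Fin n) (Fin n) ℂ) :
    entryCLM i j B = B i j := rfl

/-- The derivative of the determinant (as a sum over permutations). -/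
noncomputable def detDeriv (A : Matrix (Fin n) (Fin n) ℂ) :
    Matrix (Fin n) (Fin n) ℂ →L[ℝ] ℂ :=
  ∑ σ : Equiv.Perm (Fin n), (Equiv.Perm.sign σ : ℂ) •
    ∑ i : Fin n, (∏ j ∈ Finset.univ.erase i, A (σ j) j) • entryCLM (σ i) i

lemma hasFDerivAt_det (A : Matrix (Fin n) (Fin n) ℂ) :
    HasFDerivAt Matrix.det (detDeriv A) A := by
  have h : (Matrix.det : Matrix (Fin n) (Fin n) ℂ → ℂ) =
      fun B => ∑ σ : Equiv.Perm (Fin n), (Equiv.Perm.sign σ : ℂ) * ∏ i, B (σ i) i := by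
    funext B; exact Matrix.det_apply' B
  rw [h, detDeriv]
  apply HasFDerivAt.fun_sum
  intro σ _
  have := (HasFDerivAt.finset_prod (u := Finset.univ)
    (g := fun i (B : Matrix (Fin n) (Fin n) ℂ) => B (σ i) i)
    (g' := fun i => entryCLM (σ i) i) (x := A)
    (fun i _ => (entryCLM (σ i) i).hasFDerivAt)).const_mul ((Equiv.Perm.sign σ : ℂ))
  exact this

lemma detDeriv_apply (A H : Matrix (Fin n) (Fin n) ℂ) :
    detDeriv A H = Matrix.trace (adjugate A * H) := by
  have key : ∀ i : Fin n, (A.updateRow i (H i)).det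
      = ∑ σ : Equiv.Perm (Fin n), (Equiv.Perm.sign σ : ℂ) *
        ((∏ j ∈ Finset.univ.erase (σ⁻¹ i), A (σ j) j) * H i (σ⁻¹ i)) := by
    intro i
    rw [Matrix.det_apply']
    refine Finset.sum_congr rfl fun σ _ => ?_
    rw [← Finset.mul_prod_erase Finset.univ _ (Finset.mem_univ (σ⁻¹ i))]
    have h1 : A.updateRow i (H i) (σ (σ⁻¹ i)) (σ⁻¹ i) = H i (σ⁻¹ i) := by
      rw [show σ (σ⁻¹ i) = i from σ.apply_symm_apply i, Matrix.updateRow_self]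
    have h2 : ∀ j ∈ Finset.univ.erase (σ⁻¹ i), A.updateRow i (H i) (σ j) j = A (σ j) j := by
      intro j hj
      have hne : σ j ≠ i := by
        intro h
        exact (Finset.mem_erase.mp hj).1 (by rw [← h, show σ⁻¹ (σ j) = j from σ.symm_apply_apply j])
      rw [Matrix.updateRow_ne hne]
    rw [h1, Finset.prod_congr rfl h2]
    ring
  have step1 : detDeriv A H = ∑ i : Fin n, (A.updateRow i (H i)).det := by
    simp only [key]
    rw [Finset.sum_comm]
    simp only [detDeriv, ContinuousLinearMap.coe_sum', Finset.sum_apply,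
      ContinuousLinearMap.coe_smul', Pi.smul_apply, entryCLM_apply, smul_eq_mul]
    refine Finset.sum_congr rfl fun σ _ => ?_
    rw [Finset.mul_sum]
    rw [← Equiv.sum_comp (σ⁻¹ : Equiv.Perm (Fin n))
      (fun i => (Equiv.Perm.sign σ : ℂ) * ((∏ j ∈ Finset.univ.erase i, A (σ j) j) * H (σ i) i))]
    refine Finset.sum_congr rfl fun i _ => ?_
    rw [show σ (σ⁻¹ i) = i from σ.apply_symm_apply i]
  have step2 : ∀ i, (A.updateRow i (H i)).det = ∑ j, adjugate A j i * H i j := by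
    intro i
    rw [← Matrix.cramer_transpose_apply, Matrix.cramer_eq_adjugate_mulVec]
    simp [← Matrix.adjugate_transpose, Matrix.transpose_apply, Matrix.mulVec, dotProduct]
  rw [step1]
  simp only [step2]
  rw [Matrix.trace, Finset.sum_comm]
  simp [Matrix.diag, Matrix.mul_apply]

lemma eval_charpoly' (B : Matrix (Fin n) (Fin n) ℂ) (x : ℂ) :
    (B.charpoly).eval x = (x • (1 : Matrix (Fin n) (Fin n) ℂ) - B).det := by
  have h : (B.charpoly).eval x = ((charmatrix B).map (Polynomial.evalRingHom x)).det :=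
    RingHom.map_det (Polynomial.evalRingHom x) (charmatrix B)
  rw [h]
  congr 1
  ext i j
  by_cases h : i = j
  · subst h
    simp [Matrix.charmatrix_apply_eq, Matrix.smul_apply, Matrix.one_apply]
  · simp [Matrix.charmatrix_apply_ne _ _ _ h, Matrix.smul_apply, Matrix.one_apply, h]

lemma trace_adj_right (A B : Matrix (Fin n) (Fin n) ℂ) (x : ℂ) :
    Matrix.trace (adjugate A * (B * (x • (1 : Matrix (Fin n) (Fin n) ℂ) - A))) =
      x * Matrix.trace (adjugate A * B) - A.det * Matrix.trace B := by
  rw [← mul_assoc, Matrix.trace_mul_comm]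
  rw [Matrix.sub_mul, Matrix.smul_mul, Matrix.one_mul, ← mul_assoc, Matrix.mul_adjugate,
    Matrix.smul_mul, Matrix.one_mul, Matrix.trace_sub, Matrix.trace_smul, Matrix.trace_smul]
  simp [smul_eq_mul]

lemma trace_adj_left (A B : Matrix (Fin n) (Fin n) ℂ) (x : ℂ) :
    Matrix.trace (adjugate A * ((x • (1 : Matrix (Fin n) (Fin n) ℂ) - A) * B)) =
      x * Matrix.trace (adjugate A * B) - A.det * Matrix.trace B := by
  rw [← mul_assoc, Matrix.mul_sub, Matrix.mul_smul, Matrix.mul_one, Matrix.adjugate_mul,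
    Matrix.sub_mul, Matrix.smul_mul, Matrix.smul_mul, Matrix.one_mul, Matrix.trace_sub,
    Matrix.trace_smul, Matrix.trace_smul]
  simp [smul_eq_mul]

lemma hasFDerivAt_pow_comp {E : Type*} [NormedAddCommGroup E] [NormedSpace ℝ E]
    {f : E → ℂ} {f' : E →L[ℝ] ℂ} {p : E} (hf : HasFDerivAt f f' p) (α : ℕ) :
    HasFDerivAt (fun q => f q ^ α) (((α : ℂ) * f p ^ (α - 1)) • f') p := by
  induction α with
  | zero =>
    have h0 : (((0 : ℕ) : ℂ) * f p ^ (0 - 1)) • f' = 0 := by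
      ext y
      simp
    have h1 : (fun q : E => f q ^ 0) = fun _ => (1 : ℂ) := by funext q; simp
    rw [h1, h0]
    exact hasFDerivAt_const (𝕜 := ℝ) (1 : ℂ) p
  | succ β ih =>
    have h := hf.mul ih
    have hfun : (fun q => f q * f q ^ β) = fun q => f q ^ (β + 1) := by
      funext q; rw [pow_succ]; ring
    have hc : f p * ((β : ℂ) * f p ^ (β - 1)) = (β : ℂ) * f p ^ β := by
      cases β with
      | zero => simp
      | succ γ => rw [Nat.add_sub_cancel, pow_succ]; ring
    have hD : (((β + 1 : ℕ) : ℂ) * f p ^ (β + 1 - 1)) • f'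
        = f p • (((β : ℂ) * f p ^ (β - 1)) • f') + f p ^ β • f' := by
      ext y
      simp only [ContinuousLinearMap.add_apply, ContinuousLinearMap.smul_apply, smul_eq_mul,
        Nat.add_sub_cancel]
      push_cast
      linear_combination (-(f' y)) * hc
    rw [← hfun] at *
    rw [hD]
    exact h

end Stmt4Aux

/-- Proposition 6.4 (reduction of the momentum map), in a local chart: if a matrix
valued map `M` solves the master equation `N*dM = dM⁻·M + M·dM⁺ + r·dM` with
`dM⁺ + dM⁻ = k·dM`, then any eigenvalue `m` of `M` of constant algebraic
multiplicity satisfies `N*dm = (k·m + r)·dm`. -/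
theorem stmt_4
    {E : Type*} [NormedAddCommGroup E] [NormedSpace ℝ E] [FiniteDimensional ℝ E]
    {n : ℕ} (U : Set E) (hU : IsOpen U)
    (N : E → E →ₗ[ℝ] E)
    (M Mplus Mminus : E → Matrix (Fin n) (Fin n) ℂ)
    (dM dMp dMm : E → E →L[ℝ] Matrix (Fin n) (Fin n) ℂ)
    (hM : ∀ p ∈ U, HasFDerivAt M (dM p) p)
    (hMp : ∀ p ∈ U, HasFDerivAt Mplus (dMp p) p)
    (hMm : ∀ p ∈ U, HasFDerivAt Mminus (dMm p) p)
    (k r : ℂ)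
    (hsum : ∀ p ∈ U, ∀ v : E, dMp p v + dMm p v = k • dM p v)
    (hmaster : ∀ p ∈ U, ∀ v : E,
        dM p (N p v) = dMm p v * M p + M p * dMp p v + r • dM p v)
    (m : E → ℂ) (dm : E → E →L[ℝ] ℂ)
    (hm : ∀ p ∈ U, HasFDerivAt m (dm p) p)
    (α : ℕ) (hα : 1 ≤ α)
    (c : ℕ → E → ℂ) (dc : ℕ → E → E →L[ℝ] ℂ)
    (hc : ∀ j ≤ n - α, ∀ p ∈ U, HasFDerivAt (c j) (dc j p) p)
    (hfact : ∀ p ∈ U,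
        (M p).charpoly = (Polynomial.X - Polynomial.C (m p)) ^ α *
          (∑ j ∈ Finset.range (n - α + 1), Polynomial.C (c j p) * Polynomial.X ^ j))
    (hnonzero : ∀ p ∈ U, (∑ j ∈ Finset.range (n - α + 1), c j p * m p ^ j) ≠ 0) :
    ∀ p ∈ U, ∀ v : E, dm p (N p v) = (k * m p + r) * dm p v := by
  -- the derivative of `q ↦ det (x•1 - M q)` computed in two ways
  have key : ∀ p ∈ U, ∀ w : E, ∀ x : ℂ,
      -(Matrix.trace (adjugate (x • (1 : Matrix (Fin n) (Fin n) ℂ) - M p) * dM p w)) =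
        (x - m p) ^ α * (∑ j ∈ Finset.range (n - α + 1), x ^ j * dc j p w)
          + (∑ j ∈ Finset.range (n - α + 1), c j p * x ^ j) *
            (((α : ℂ) * (x - m p) ^ (α - 1)) * (-(dm p w))) := by
    intro p hp w x
    have hAff : HasFDerivAt (fun q => x • (1 : Matrix (Fin n) (Fin n) ℂ) - M q)
        (0 - dM p) p := (hasFDerivAt_const _ _).sub (hM p hp)
    have hD1 : HasFDerivAt (fun q => (x • (1 : Matrix (Fin n) (Fin n) ℂ) - M q).det)
        ((Stmt4Aux.detDeriv (x • 1 - M p)).comp (0 - dM p)) p :=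
      (Stmt4Aux.hasFDerivAt_det _).comp p hAff
    have hsub : HasFDerivAt (fun q => x - m q) (0 - dm p) p :=
      (hasFDerivAt_const _ _).sub (hm p hp)
    have hPow : HasFDerivAt (fun q => (x - m q) ^ α)
        (((α : ℂ) * (x - m p) ^ (α - 1)) • (0 - dm p)) p :=
      Stmt4Aux.hasFDerivAt_pow_comp hsub α
    have hQ : HasFDerivAt (fun q => ∑ j ∈ Finset.range (n - α + 1), c j q * x ^ j)
        (∑ j ∈ Finset.range (n - α + 1), (x ^ j) • dc j p) p := by
      apply HasFDerivAt.fun_sum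
      intro j hj
      exact (hc j (by have := Finset.mem_range.mp hj; omega) p hp).mul_const _
    have hD2 := hPow.mul hQ
    have hEqF : (fun q => (x • (1 : Matrix (Fin n) (Fin n) ℂ) - M q).det)
        =ᶠ[nhds p] (fun q => (x - m q) ^ α * ∑ j ∈ Finset.range (n - α + 1), c j q * x ^ j) := by
      filter_upwards [hU.mem_nhds hp] with q hq
      rw [← Stmt4Aux.eval_charpoly', hfact q hq]
      simp [Polynomial.eval_finset_sum]
    have hD1' : HasFDerivAt
        (fun q => (x - m q) ^ α * ∑ j ∈ Finset.range (n - α + 1), c j q * x ^ j)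
        ((Stmt4Aux.detDeriv (x • 1 - M p)).comp (0 - dM p)) p :=
      hD1.congr_of_eventuallyEq hEqF.symm
    have huniq := hD1'.unique hD2
    have happ := congrArg (fun L : E →L[ℝ] ℂ => L w) huniq
    simp only [ContinuousLinearMap.comp_apply, ContinuousLinearMap.sub_apply,
      ContinuousLinearMap.zero_apply, ContinuousLinearMap.add_apply,
      ContinuousLinearMap.smul_apply, ContinuousLinearMap.coe_sum', Finset.sum_apply,
      Pi.smul_apply, smul_eq_mul, zero_sub, map_neg, ContinuousLinearMap.neg_apply,
      Matrix.mul_neg, Matrix.trace_neg] at happ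
    rw [Stmt4Aux.detDeriv_apply] at happ
    linear_combination happ
  -- the master equation at the level of traces
  have master_tr : ∀ p ∈ U, ∀ v : E, ∀ x : ℂ,
      Matrix.trace (adjugate (x • (1 : Matrix (Fin n) (Fin n) ℂ) - M p) * dM p (N p v)) =
        (k * x + r) * Matrix.trace (adjugate (x • (1 : Matrix (Fin n) (Fin n) ℂ) - M p) * dM p v)
          - k * (x • (1 : Matrix (Fin n) (Fin n) ℂ) - M p).det * Matrix.trace (dM p v) := by
    intro p hp v x
    set A := x • (1 : Matrix (Fin n) (Fin n) ℂ) - M p with hA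
    have hMp' : M p = x • (1 : Matrix (Fin n) (Fin n) ℂ) - A := (sub_sub_cancel _ _).symm
    rw [hmaster p hp v, hMp']
    rw [Matrix.mul_add, Matrix.mul_add, Matrix.trace_add, Matrix.trace_add]
    have t1 := Stmt4Aux.trace_adj_right A (dMm p v) x
    have t2 := Stmt4Aux.trace_adj_left A (dMp p v) x
    have t3 : Matrix.trace (adjugate A * (r • dM p v))
        = r * Matrix.trace (adjugate A * dM p v) := by
      rw [mul_smul_comm, Matrix.trace_smul, smul_eq_mul]
    have hs := hsum p hp v
    have e1 : Matrix.trace (adjugate A * dMp p v) + Matrix.trace (adjugate A * dMm p v)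
        = k * Matrix.trace (adjugate A * dM p v) := by
      rw [← Matrix.trace_add, ← Matrix.mul_add, hs, mul_smul_comm, Matrix.trace_smul, smul_eq_mul]
    have e2 : Matrix.trace (dMp p v) + Matrix.trace (dMm p v)
        = k * Matrix.trace (dM p v) := by
      rw [← Matrix.trace_add, hs, Matrix.trace_smul, smul_eq_mul]
    linear_combination t1 + t2 + t3 + x * e1 - A.det * e1 * 0 - A.det * e2
  -- now the endgame
  intro p hp v
  obtain ⟨β, rfl⟩ : ∃ β, α = β + 1 := ⟨α - 1, (Nat.succ_pred_eq_of_pos hα).symm⟩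
  -- the scalar identity, for every x
  have scalar : ∀ x : ℂ,
      (x - m p) ^ (β + 1) *
          (∑ j ∈ Finset.range (n - (β + 1) + 1), dc j p (N p v) * x ^ j)
        + (∑ j ∈ Finset.range (n - (β + 1) + 1), c j p * x ^ j) *
            ((((β + 1 : ℕ) : ℂ)) * (x - m p) ^ β * (-(dm p (N p v))))
      = (k * x + r) *
          ((x - m p) ^ (β + 1) *
              (∑ j ∈ Finset.range (n - (β + 1) + 1), dc j p v * x ^ j)
            + (∑ j ∈ Finset.range (n - (β + 1) + 1), c j p * x ^ j) *
                ((((β + 1 : ℕ) : ℂ)) * (x - m p) ^ β * (-(dm p v))))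
        + k * Matrix.trace (dM p v) *
            ((x - m p) ^ (β + 1) * (∑ j ∈ Finset.range (n - (β + 1) + 1), c j p * x ^ j)) := by
    intro x
    have h1 := key p hp (N p v) x
    have h2 := key p hp v x
    have h3 := master_tr p hp v x
    have hcomm : ∀ u : E, (∑ j ∈ Finset.range (n - (β + 1) + 1), x ^ j * dc j p u)
        = ∑ j ∈ Finset.range (n - (β + 1) + 1), dc j p u * x ^ j :=
      fun u => Finset.sum_congr rfl fun j _ => mul_comm _ _
    simp only [Nat.add_sub_cancel, hcomm] at h1 h2
    have hdet : (x • (1 : Matrix (Fin n) (Fin n) ℂ) - M p).det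
        = (x - m p) ^ (β + 1) * (∑ j ∈ Finset.range (n - (β + 1) + 1), c j p * x ^ j) := by
      rw [← Stmt4Aux.eval_charpoly', hfact p hp]
      simp [Polynomial.eval_finset_sum]
    linear_combination (-1 : ℂ) * h1 + (k * x + r) * h2 + (-1 : ℂ) * h3
      + (k * Matrix.trace (dM p v)) * hdet
  -- turn it into a polynomial identity
  set QP : Polynomial ℂ :=
    ∑ j ∈ Finset.range (n - (β + 1) + 1), Polynomial.C (c j p) * Polynomial.X ^ j with hQP
  set RPw : Polynomial ℂ :=
    ∑ j ∈ Finset.range (n - (β + 1) + 1), Polynomial.C (dc j p (N p v)) * Polynomial.X ^ j with hRPw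
  set RPv : Polynomial ℂ :=
    ∑ j ∈ Finset.range (n - (β + 1) + 1), Polynomial.C (dc j p v) * Polynomial.X ^ j with hRPv
  set P1 : Polynomial ℂ :=
    (Polynomial.X - Polynomial.C (m p)) * RPw
      + Polynomial.C ((((β + 1 : ℕ) : ℂ)) * (-(dm p (N p v)))) * QP with hP1
  set P2 : Polynomial ℂ :=
    (Polynomial.C k * Polynomial.X + Polynomial.C r) *
        ((Polynomial.X - Polynomial.C (m p)) * RPv
          + Polynomial.C ((((β + 1 : ℕ) : ℂ)) * (-(dm p v))) * QP)
      + Polynomial.C (k * Matrix.trace (dM p v)) *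
          ((Polynomial.X - Polynomial.C (m p)) * QP) with hP2
  have hpoly : (Polynomial.X - Polynomial.C (m p)) ^ β * P1
      = (Polynomial.X - Polynomial.C (m p)) ^ β * P2 := by
    apply Polynomial.funext
    intro x
    have hs := scalar x
    simp only [hP1, hP2, hQP, hRPw, hRPv, Polynomial.eval_mul, Polynomial.eval_add,
      Polynomial.eval_sub, Polynomial.eval_pow, Polynomial.eval_X, Polynomial.eval_C,
      Polynomial.eval_finset_sum]
    linear_combination hs
  have hne : ((Polynomial.X : Polynomial ℂ) - Polynomial.C (m p)) ^ β ≠ 0 :=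
    pow_ne_zero _ (Polynomial.X_sub_C_ne_zero (m p))
  have hP12 : P1 = P2 := mul_left_cancel₀ hne hpoly
  have hev := congrArg (Polynomial.eval (m p)) hP12
  simp only [hP1, hP2, hQP, hRPw, hRPv, Polynomial.eval_mul, Polynomial.eval_add,
    Polynomial.eval_sub, Polynomial.eval_pow, Polynomial.eval_X, Polynomial.eval_C,
    Polynomial.eval_finset_sum, sub_self, zero_mul, mul_zero, add_zero, zero_add] at hev
  have hQmu : (∑ j ∈ Finset.range (n - (β + 1) + 1), c j p * m p ^ j) ≠ 0 := hnonzero p hp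
  have hαn : (((β + 1 : ℕ)) : ℂ) ≠ 0 := Nat.cast_ne_zero.mpr (Nat.succ_ne_zero β)
  have hfin : ((((β + 1 : ℕ)) : ℂ) * (∑ j ∈ Finset.range (n - (β + 1) + 1), c j p * m p ^ j))
        * dm p (N p v)
      = ((((β + 1 : ℕ)) : ℂ) * (∑ j ∈ Finset.range (n - (β + 1) + 1), c j p * m p ^ j))
        * ((k * m p + r) * dm p v) := by
    linear_combination (-1 : ℂ) * hev
  exact mul_left_cancel₀ (mul_ne_zero hαn hQmu) hfin
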